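/- Let β_r and ζ be positive integers and set β = ζ·β_r; let m ≥ 1 be a real number. Let x_1,…,x_{β_r} be i.i.d. arcsine-distributed random variables, d uniform on {−1,+1}, and h a Nakagami-m amplitude, all mutually independent. Let Y = h·(1 + ζ·d)·Σ_{k=1}^{β_r} x_k (the correlator output of a β_r-SR-DCSK symbol, whose chips sum to (1+ζd)·Σ_{k=1}^{β_r} x_k). Then for any reals ε₁, ε₂, the harvested DC satisfies ε₁·E[Y²] + ε₂·E[Y⁴] = ε₁·(β_r² + β²)/(2β_r) + ε₂·(3(1+m)/(8m))·(1 + 6ζ² + ζ⁴)·(2β_r² − β_r). -/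

import Mathlib

open MeasureTheory ProbabilityTheory
open scoped ENNReal

/-- The arcsine (Chebyshev invariant) distribution on (−1,1), with density
1/(π√(1−x²)) for |x| < 1 and 0 otherwise. -/
noncomputable def arcsineMeasure : Measure ℝ :=
  volume.withDensity fun x =>
    ENNReal.ofReal (if |x| < 1 then 1 / (Real.pi * Real.sqrt (1 - x ^ 2)) else 0)

open Real Set in
noncomputable def arcDen (x : ℝ) : ℝ :=
  if |x| < 1 then 1 / (Real.pi * Real.sqrt (1 - x ^ 2)) else 0

lemma arcDen_nonneg (x : ℝ) : 0 ≤ arcDen x := by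
  unfold arcDen; split
  · have := Real.pi_pos
    positivity
  · exact le_refl 0

lemma arcDen_meas : Measurable arcDen := by
  unfold arcDen
  exact Measurable.ite (measurableSet_lt (by fun_prop) measurable_const) (by fun_prop) measurable_const

lemma arcsine_integral (g : ℝ → ℝ) :
    ∫ y, g y ∂arcsineMeasure = ∫ x in Set.Ioo (-1:ℝ) 1, arcDen x * g x := by
  have h1 : arcsineMeasure
      = volume.withDensity (fun x => ((fun y => (arcDen y).toNNReal) x : ℝ≥0∞)) := rfl
  rw [h1, integral_withDensity_eq_integral_smul (arcDen_meas.real_toNNReal) g]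
  have h2 : ∀ x : ℝ, (arcDen x).toNNReal • g x = arcDen x * g x := by
    intro x
    rw [NNReal.smul_def, Real.coe_toNNReal _ (arcDen_nonneg x), smul_eq_mul]
  simp_rw [h2]
  rw [← setIntegral_eq_integral_of_forall_compl_eq_zero (s := Set.Ioo (-1:ℝ) 1)]
  intro x hx
  have : ¬ |x| < 1 := by
    simp only [Set.mem_Ioo, not_and_or, not_lt] at hx ⊢
    rcases hx with hx | hx
    · exact le_abs.2 (Or.inr (by linarith))
    · exact le_abs.2 (Or.inl hx)
  simp [arcDen, this]

open Real in
lemma sin_image_Ioo : Real.sin '' Set.Ioo (-(π/2)) (π/2) = Set.Ioo (-1:ℝ) 1 := by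
  ext y
  constructor
  · rintro ⟨θ, hθ, rfl⟩
    obtain ⟨h1, h2⟩ := hθ
    constructor
    · have := Real.strictMonoOn_sin (Set.mem_Icc.2 ⟨le_refl _, by linarith [Real.pi_pos]⟩)
        (Set.mem_Icc.2 ⟨h1.le, h2.le⟩) h1
      simpa using this
    · have := Real.strictMonoOn_sin (Set.mem_Icc.2 ⟨h1.le, h2.le⟩)
        (Set.mem_Icc.2 ⟨by linarith [Real.pi_pos], le_refl _⟩) h2
      simpa using this
  · rintro ⟨h1, h2⟩
    refine ⟨Real.arcsin y, ⟨?_, ?_⟩, Real.sin_arcsin h1.le h2.le⟩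
    · exact Real.neg_pi_div_two_lt_arcsin.2 h1
    · exact Real.arcsin_lt_pi_div_two.2 h2

open Real in
lemma arcsine_moment (n : ℕ) :
    ∫ y, y ^ n ∂arcsineMeasure = (∫ θ in (-(π/2))..(π/2), Real.sin θ ^ n) / π := by
  rw [arcsine_integral, ← sin_image_Ioo,
    integral_image_eq_integral_abs_deriv_smul measurableSet_Ioo
      (fun θ _ => (Real.hasDerivAt_sin θ).hasDerivWithinAt)
      (Real.injOn_sin.mono Set.Ioo_subset_Icc_self)]
  rw [setIntegral_congr_fun (g := fun θ => Real.sin θ ^ n / π) measurableSet_Ioo ?_]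
  · rw [intervalIntegral.integral_of_le (by linarith [Real.pi_pos]),
      ← MeasureTheory.integral_Ioc_eq_integral_Ioo, integral_div]
  · intro θ hθ
    have hc : 0 < Real.cos θ := Real.cos_pos_of_mem_Ioo hθ
    have hs : |Real.sin θ| < 1 := by
      have : Real.sin θ ∈ Set.Ioo (-1:ℝ) 1 := by
        rw [← sin_image_Ioo]; exact ⟨θ, hθ, rfl⟩
      rw [abs_lt]; exact ⟨this.1, this.2⟩
    have hsq : Real.sqrt (1 - Real.sin θ ^ 2) = Real.cos θ := by
      rw [← Real.cos_sq', Real.sqrt_sq hc.le]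
    simp only [smul_eq_mul, arcDen, if_pos hs, hsq, abs_of_pos hc]
    field_simp

open Real intervalIntegral in
lemma arcsine_m1 : ∫ y, y ∂arcsineMeasure = 0 := by
  have := arcsine_moment 1
  simp only [pow_one] at this
  rw [this, integral_sin]
  simp [Real.cos_pi_div_two]

open Real intervalIntegral in
lemma arcsine_m2 : ∫ y, y ^ 2 ∂arcsineMeasure = 1 / 2 := by
  rw [arcsine_moment 2, integral_sin_sq]
  have hπ : (π : ℝ) ≠ 0 := Real.pi_ne_zero
  simp [Real.cos_pi_div_two, Real.sin_pi_div_two]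
  field_simp

open Real intervalIntegral in
lemma arcsine_m3 : ∫ y, y ^ 3 ∂arcsineMeasure = 0 := by
  rw [arcsine_moment 3, show (3:ℕ) = 1 + 2 from rfl, integral_sin_pow]
  simp [Real.cos_pi_div_two, integral_sin]

open Real intervalIntegral in
lemma arcsine_m4 : ∫ y, y ^ 4 ∂arcsineMeasure = 3 / 8 := by
  rw [arcsine_moment 4, show (4:ℕ) = 2 + 2 from rfl, integral_sin_pow, integral_sin_sq]
  have hπ : (π : ℝ) ≠ 0 := Real.pi_ne_zero
  simp [Real.cos_pi_div_two, Real.sin_pi_div_two]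
  field_simp
  ring

/-- The uniform distribution on {−1, +1}. -/
noncomputable def rademacherMeasure : Measure ℝ :=
  (1 / 2 : ℝ≥0∞) • Measure.dirac (-1) + (1 / 2 : ℝ≥0∞) • Measure.dirac 1

lemma integrable_dirac'' (g : ℝ → ℝ) (a : ℝ) : Integrable g (Measure.dirac a) := by
  have h : (fun _ : ℝ => g a) =ᵐ[Measure.dirac a] g := by
    rw [MeasureTheory.ae_dirac_eq]
    exact Filter.eventually_pure.2 rfl
  exact (integrable_const (g a)).congr h

lemma rademacher_integral (g : ℝ → ℝ) :
    ∫ y, g y ∂rademacherMeasure = (g (-1) + g 1) / 2 := by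
  have hint : ∀ a : ℝ, Integrable g ((1 / 2 : ℝ≥0∞) • Measure.dirac a) :=
    fun a => (integrable_dirac'' g a).smul_measure (by norm_num)
  rw [rademacherMeasure, integral_add_measure (hint _) (hint _),
    integral_smul_measure, integral_smul_measure, integral_dirac, integral_dirac]
  norm_num
  ring

/-- The distribution of a unit-mean-power Nakagami-m amplitude, with density
2 m^m z^{2m−1} e^{−m z²}/Γ(m) for z ≥ 0 and 0 otherwise. -/
noncomputable def nakagamiMeasure (m : ℝ) : Measure ℝ :=
  volume.withDensity fun z =>
    ENNReal.ofReal (if 0 ≤ z then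
      2 * m ^ m * z ^ (2 * m - 1) * Real.exp (-m * z ^ 2) / Real.Gamma m else 0)

noncomputable def nakDen (m z : ℝ) : ℝ :=
  if 0 ≤ z then 2 * m ^ m * z ^ (2 * m - 1) * Real.exp (-m * z ^ 2) / Real.Gamma m else 0

lemma nakDen_nonneg (m : ℝ) (hm : 0 < m) (z : ℝ) : 0 ≤ nakDen m z := by
  unfold nakDen; split
  · have h1 : 0 < Real.Gamma m := Real.Gamma_pos_of_pos hm
    have h2 : (0:ℝ) ≤ m ^ m := Real.rpow_nonneg hm.le m
    have h3 : (0:ℝ) ≤ (z : ℝ) ^ (2*m-1) := Real.rpow_nonneg (by assumption) _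
    positivity
  · exact le_refl 0

lemma nakDen_meas (m : ℝ) : Measurable (nakDen m) := by
  unfold nakDen
  refine Measurable.ite measurableSet_Ici ?_ measurable_const
  fun_prop

lemma nak_integral (m : ℝ) (hm : 0 < m) (g : ℝ → ℝ) :
    ∫ y, g y ∂nakagamiMeasure m = ∫ z, nakDen m z * g z := by
  have h1 : nakagamiMeasure m
      = volume.withDensity (fun z => ((fun y => (nakDen m y).toNNReal) z : ℝ≥0∞)) := rfl
  rw [h1, integral_withDensity_eq_integral_smul ((nakDen_meas m).real_toNNReal) g]
  congr 1
  funext z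
  rw [NNReal.smul_def, Real.coe_toNNReal _ (nakDen_nonneg m hm z), smul_eq_mul]

open Real in
lemma nak_moment (m : ℝ) (hm : 0 < m) (j : ℕ) (hj : 1 ≤ j) :
    ∫ y, y ^ (2*j) ∂nakagamiMeasure m
      = m ^ (-(j:ℝ)) * (Real.Gamma (m + j) / Real.Gamma m) := by
  rw [nak_integral m hm]
  rw [← setIntegral_eq_integral_of_forall_compl_eq_zero (s := Set.Ioi (0:ℝ)) ?_]
  · have hcong : ∀ z ∈ Set.Ioi (0:ℝ), nakDen m z * z ^ (2*j)
        = (2 * m ^ m / Real.Gamma m) * (z ^ (2*m-1+2*(j:ℝ)) * Real.exp (-m * z ^ (2:ℝ))) := by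
      intro z hz
      have hz' : (0:ℝ) < z := hz
      rw [nakDen, if_pos hz'.le]
      have h1 : (z : ℝ) ^ (2*j) = z ^ ((2*(j:ℝ))) := by
        rw [show (2*(j:ℝ)) = ((2*j : ℕ) : ℝ) by push_cast; ring, Real.rpow_natCast]
      have h2 : z ^ (2*m-1+2*(j:ℝ)) = z ^ (2*m-1) * z ^ (2*(j:ℝ)) := Real.rpow_add hz' _ _
      have h3 : z ^ ((2:ℝ)) = z ^ (2:ℕ) := by
        rw [show ((2:ℝ)) = ((2:ℕ):ℝ) by norm_num, Real.rpow_natCast]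
      rw [h1, h2, h3]
      ring
    have hq : (-1:ℝ) < 2*m-1+2*(j:ℝ) := by
      have h5 : (1:ℝ) ≤ (j:ℝ) := by exact_mod_cast hj
      nlinarith
    rw [setIntegral_congr_fun measurableSet_Ioi hcong, MeasureTheory.integral_const_mul,
      integral_rpow_mul_exp_neg_mul_rpow two_pos hq hm]
    have he : (2*m-1+2*(j:ℝ)+1)/2 = m + j := by ring
    have he2 : -(2*m-1+2*(j:ℝ)+1)/2 = -(m + j) := by ring
    rw [he, he2]
    have h4 : m ^ m * m ^ (-(m+(j:ℝ))) = m ^ (-(j:ℝ)) := by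
      rw [← Real.rpow_add hm]; congr 1; ring
    have hg : Real.Gamma m ≠ 0 := (Real.Gamma_pos_of_pos hm).ne'
    field_simp
    rw [← h4]
  · intro z hz
    simp only [Set.mem_Ioi, not_lt] at hz
    rcases lt_or_eq_of_le hz with h | h
    · have : nakDen m z = 0 := by rw [nakDen, if_neg (not_le.2 h)]
      rw [this, zero_mul]
    · subst h
      rw [zero_pow (by omega), mul_zero]

lemma nak_m2 (m : ℝ) (hm : 0 < m) : ∫ y, y ^ 2 ∂nakagamiMeasure m = 1 := by
  have := nak_moment m hm 1 (le_refl 1)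
  rw [show 2*1 = 2 by norm_num] at this
  rw [this]
  have hΓ : Real.Gamma (m + 1) = m * Real.Gamma m := Real.Gamma_add_one hm.ne'
  have hg : Real.Gamma m ≠ 0 := (Real.Gamma_pos_of_pos hm).ne'
  rw [show ((1:ℕ):ℝ) = 1 by norm_num] at *
  rw [hΓ, Real.rpow_neg_one]
  field_simp

lemma nak_m4 (m : ℝ) (hm : 0 < m) : ∫ y, y ^ 4 ∂nakagamiMeasure m = (1 + m) / m := by
  have := nak_moment m hm 2 (by norm_num)
  rw [show 2*2 = 4 by norm_num] at this
  rw [this]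
  have hΓ1 : Real.Gamma (m + 1) = m * Real.Gamma m := Real.Gamma_add_one hm.ne'
  have hΓ2 : Real.Gamma (m + 2) = (m+1) * (m * Real.Gamma m) := by
    rw [show m + 2 = (m + 1) + 1 by ring, Real.Gamma_add_one (by positivity), hΓ1]
  have hg : Real.Gamma m ≠ 0 := (Real.Gamma_pos_of_pos hm).ne'
  rw [show ((2:ℕ):ℝ) = 2 by norm_num] at *
  rw [hΓ2, show (-(2:ℝ)) = ((-2 : ℤ) : ℝ) by norm_num, Real.rpow_intCast]
  rw [show ((-2:ℤ)) = -(2:ℕ) by norm_num, zpow_neg, zpow_natCast]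
  have hm' : m ≠ 0 := hm.ne'
  field_simp
  ring

open Real in
lemma nak_integrable (m : ℝ) (hm : 0 < m) (j : ℕ) (hj : 1 ≤ j) :
    Integrable (fun z : ℝ => z ^ (2*j)) (nakagamiMeasure m) := by
  rw [nakagamiMeasure, integrable_withDensity_iff]
  rotate_left
  · exact (nakDen_meas m).ennreal_ofReal
  · exact Filter.Eventually.of_forall fun _ => ENNReal.ofReal_lt_top
  · have heq : (fun z : ℝ => z ^ (2*j) * (ENNReal.ofReal (nakDen m z)).toReal)
        = fun z : ℝ => z ^ (2*j) * nakDen m z := by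
      funext z
      rw [ENNReal.toReal_ofReal (nakDen_nonneg m hm z)]
    show Integrable (fun z : ℝ => z ^ (2*j) *
        (ENNReal.ofReal (if 0 ≤ z then 2 * m ^ m * z ^ (2 * m - 1) * Real.exp (-m * z ^ 2) / Real.Gamma m else 0)).toReal) volume
    rw [show (fun z : ℝ => z ^ (2*j) *
        (ENNReal.ofReal (if 0 ≤ z then 2 * m ^ m * z ^ (2 * m - 1) * Real.exp (-m * z ^ 2) / Real.Gamma m else 0)).toReal)
        = fun z : ℝ => z ^ (2*j) * nakDen m z from heq]
    rw [← integrableOn_univ, ← Set.Iic_union_Ioi (a := (0:ℝ)), integrableOn_union]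
    constructor
    · refine (integrableOn_zero (s := Set.Iic (0:ℝ))).congr_fun ?_ measurableSet_Iic
      intro z hz
      rcases lt_or_eq_of_le (Set.mem_Iic.1 hz) with h | h
      · simp [nakDen, not_le.2 h]
      · subst h
        simp [zero_pow (show 2*j ≠ 0 by omega)]
    · have hq : (-1:ℝ) < 2*m-1+2*(j:ℝ) := by
        have h5 : (1:ℝ) ≤ (j:ℝ) := by exact_mod_cast hj
        nlinarith
      have hbase : IntegrableOn (fun z : ℝ => (2 * m ^ m / Real.Gamma m) *
          (z ^ (2*m-1+2*(j:ℝ)) * Real.exp (-m * z ^ 2))) (Set.Ioi 0) volume :=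
        (integrableOn_rpow_mul_exp_neg_mul_sq hm hq).const_mul (2 * m ^ m / Real.Gamma m)
      refine hbase.congr_fun ?_ measurableSet_Ioi
      intro z hz
      have hz' : (0:ℝ) < z := hz
      show (2 * m ^ m / Real.Gamma m) * (z ^ (2*m-1+2*(j:ℝ)) * Real.exp (-m * z ^ 2))
          = z ^ (2*j) * nakDen m z
      rw [nakDen, if_pos hz'.le]
      have h1 : (z : ℝ) ^ (2*j) = z ^ ((2*(j:ℝ))) := by
        rw [show (2*(j:ℝ)) = ((2*j : ℕ) : ℝ) by push_cast; ring, Real.rpow_natCast]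
      have h2 : z ^ (2*m-1+2*(j:ℝ)) = z ^ (2*m-1) * z ^ (2*(j:ℝ)) := Real.rpow_add hz' _ _
      rw [h1, h2]
      ring

section omegaside
variable {Ω : Type*} [MeasurableSpace Ω] {P : Measure Ω} [IsProbabilityMeasure P]

lemma integrable_of_ae_bdd {f : Ω → ℝ} {C : ℝ} (hf : Measurable f)
    (hb : ∀ᵐ ω ∂P, |f ω| ≤ C) : Integrable f P :=
  Integrable.mono' (integrable_const C) hf.aestronglyMeasurable
    (by simpa [Real.norm_eq_abs] using hb)

lemma pow_integrable {A : Ω → ℝ} {CA : ℝ} (hA : Measurable A)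
    (hbA : ∀ᵐ ω ∂P, |A ω| ≤ CA) (a : ℕ) : Integrable (fun ω => A ω ^ a) P := by
  refine integrable_of_ae_bdd (hA.pow_const a) (C := CA ^ a) ?_
  filter_upwards [hbA] with ω hω
  rw [abs_pow]
  exact pow_le_pow_left₀ (abs_nonneg _) hω a

lemma pow_mul_integrable {A B : Ω → ℝ} {CA CB : ℝ} (hA : Measurable A) (hB : Measurable B)
    (hbA : ∀ᵐ ω ∂P, |A ω| ≤ CA) (hbB : ∀ᵐ ω ∂P, |B ω| ≤ CB) (a b : ℕ) :
    Integrable (fun ω => A ω ^ a * B ω ^ b) P := by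
  refine integrable_of_ae_bdd ((hA.pow_const a).mul (hB.pow_const b)) (C := CA ^ a * CB ^ b) ?_
  filter_upwards [hbA, hbB] with ω h1 h2
  rw [abs_mul, abs_pow, abs_pow]
  have hCA : (0:ℝ) ≤ CA := le_trans (abs_nonneg _) h1
  have hCB : (0:ℝ) ≤ CB := le_trans (abs_nonneg _) h2
  exact mul_le_mul (pow_le_pow_left₀ (abs_nonneg _) h1 a) (pow_le_pow_left₀ (abs_nonneg _) h2 b)
    (by positivity) (by positivity)

lemma moment_mul {A B : Ω → ℝ} {CA CB : ℝ} (hAB : IndepFun A B P)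
    (hA : Measurable A) (hB : Measurable B)
    (hbA : ∀ᵐ ω ∂P, |A ω| ≤ CA) (hbB : ∀ᵐ ω ∂P, |B ω| ≤ CB) (a b : ℕ) :
    ∫ ω, A ω ^ a * B ω ^ b ∂P = (∫ ω, A ω ^ a ∂P) * (∫ ω, B ω ^ b ∂P) := by
  have h1 : IndepFun (fun ω => A ω ^ a) (fun ω => B ω ^ b) P :=
    hAB.comp (measurable_id.pow_const a) (measurable_id.pow_const b)
  exact h1.integral_fun_mul_eq_mul_integral (pow_integrable hA hbA a).aestronglyMeasurable (pow_integrable hB hbB b).aestronglyMeasurable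

lemma sum_moments {A B : Ω → ℝ} {CA CB : ℝ} (hAB : IndepFun A B P)
    (hA : Measurable A) (hB : Measurable B)
    (hbA : ∀ᵐ ω ∂P, |A ω| ≤ CA) (hbB : ∀ᵐ ω ∂P, |B ω| ≤ CB)
    {a2 a4 b2 b4 : ℝ}
    (hA1 : ∫ ω, A ω ∂P = 0) (hA2 : ∫ ω, A ω ^ 2 ∂P = a2)
    (hA3 : ∫ ω, A ω ^ 3 ∂P = 0) (hA4 : ∫ ω, A ω ^ 4 ∂P = a4)
    (hB1 : ∫ ω, B ω ∂P = 0) (hB2 : ∫ ω, B ω ^ 2 ∂P = b2)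
    (hB3 : ∫ ω, B ω ^ 3 ∂P = 0) (hB4 : ∫ ω, B ω ^ 4 ∂P = b4) :
    (∫ ω, (A ω + B ω) ∂P = 0) ∧ (∫ ω, (A ω + B ω) ^ 2 ∂P = a2 + b2)
      ∧ (∫ ω, (A ω + B ω) ^ 3 ∂P = 0)
      ∧ (∫ ω, (A ω + B ω) ^ 4 ∂P = a4 + 6 * a2 * b2 + b4) := by
  have hI : ∀ a b : ℕ, Integrable (fun ω => A ω ^ a * B ω ^ b) P :=
    pow_mul_integrable hA hB hbA hbB
  have hK : ∀ a b : ℕ, ∫ ω, A ω ^ a * B ω ^ b ∂P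
      = (∫ ω, A ω ^ a ∂P) * (∫ ω, B ω ^ b ∂P) := moment_mul hAB hA hB hbA hbB
  have hA1' : ∫ ω, A ω ^ 1 ∂P = 0 := by simpa using hA1
  have hB1' : ∫ ω, B ω ^ 1 ∂P = 0 := by simpa using hB1
  have hA0 : ∫ ω, A ω ^ 0 ∂P = 1 := by simp
  have hB0 : ∫ ω, B ω ^ 0 ∂P = 1 := by simp
  have i11 : Integrable (fun ω => 2 * (A ω ^ 1 * B ω ^ 1)) P := (hI 1 1).const_mul 2
  have i21 : Integrable (fun ω => 3 * (A ω ^ 2 * B ω ^ 1)) P := (hI 2 1).const_mul 3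
  have i12 : Integrable (fun ω => 3 * (A ω ^ 1 * B ω ^ 2)) P := (hI 1 2).const_mul 3
  have i31 : Integrable (fun ω => 4 * (A ω ^ 3 * B ω ^ 1)) P := (hI 3 1).const_mul 4
  have i22 : Integrable (fun ω => 6 * (A ω ^ 2 * B ω ^ 2)) P := (hI 2 2).const_mul 6
  have i13 : Integrable (fun ω => 4 * (A ω ^ 1 * B ω ^ 3)) P := (hI 1 3).const_mul 4
  have s2 : Integrable (fun ω => 2 * (A ω ^ 1 * B ω ^ 1) + A ω ^ 0 * B ω ^ 2) P := i11.add (hI 0 2)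
  have s3b : Integrable (fun ω => 3 * (A ω ^ 1 * B ω ^ 2) + A ω ^ 0 * B ω ^ 3) P := i12.add (hI 0 3)
  have s3 : Integrable (fun ω => 3 * (A ω ^ 2 * B ω ^ 1) + (3 * (A ω ^ 1 * B ω ^ 2) + A ω ^ 0 * B ω ^ 3)) P := i21.add s3b
  have s4c : Integrable (fun ω => 4 * (A ω ^ 1 * B ω ^ 3) + A ω ^ 0 * B ω ^ 4) P := i13.add (hI 0 4)
  have s4b : Integrable (fun ω => 6 * (A ω ^ 2 * B ω ^ 2) + (4 * (A ω ^ 1 * B ω ^ 3) + A ω ^ 0 * B ω ^ 4)) P := i22.add s4c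
  have s4 : Integrable (fun ω => 4 * (A ω ^ 3 * B ω ^ 1) + (6 * (A ω ^ 2 * B ω ^ 2) + (4 * (A ω ^ 1 * B ω ^ 3) + A ω ^ 0 * B ω ^ 4))) P := i31.add s4b
  refine ⟨?_, ?_, ?_, ?_⟩
  · have iA : Integrable A P := integrable_of_ae_bdd hA hbA
    have iB : Integrable B P := integrable_of_ae_bdd hB hbB
    rw [integral_add iA iB, hA1, hB1, add_zero]
  · have e : (fun ω => (A ω + B ω) ^ 2)
        = fun ω => A ω ^ 2 * B ω ^ 0 + (2 * (A ω ^ 1 * B ω ^ 1) + A ω ^ 0 * B ω ^ 2) := by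
      funext ω; ring
    rw [e, integral_add (hI 2 0) s2, integral_add i11 (hI 0 2), MeasureTheory.integral_const_mul,
      hK, hK, hK, hA2, hB2, hA0, hB0, hA1', hB1']
    ring
  · have e : (fun ω => (A ω + B ω) ^ 3)
        = fun ω => A ω ^ 3 * B ω ^ 0 + (3 * (A ω ^ 2 * B ω ^ 1)
            + (3 * (A ω ^ 1 * B ω ^ 2) + A ω ^ 0 * B ω ^ 3)) := by
      funext ω; ring
    rw [e, integral_add (hI 3 0) s3, integral_add i21 s3b, integral_add i12 (hI 0 3),
      MeasureTheory.integral_const_mul, MeasureTheory.integral_const_mul,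
      hK, hK, hK, hK, hA3, hB3, hA0, hB0, hA1', hB1']
    ring
  · have e : (fun ω => (A ω + B ω) ^ 4)
        = fun ω => A ω ^ 4 * B ω ^ 0 + (4 * (A ω ^ 3 * B ω ^ 1)
            + (6 * (A ω ^ 2 * B ω ^ 2) + (4 * (A ω ^ 1 * B ω ^ 3) + A ω ^ 0 * B ω ^ 4))) := by
      funext ω; ring
    rw [e, integral_add (hI 4 0) s4, integral_add i31 s4b, integral_add i22 s4c,
      integral_add i13 (hI 0 4),
      MeasureTheory.integral_const_mul, MeasureTheory.integral_const_mul, MeasureTheory.integral_const_mul,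
      hK, hK, hK, hK, hK, hA4, hB4, hA2, hB2, hA0, hB0, hA1', hB1']
    ring

end omegaside

/-- harvested DC of the correlator output
Y = h·(1+ζd)·Σ_{k=1}^{β_r} x_k of a β_r-SR-DCSK symbol (β = ζβ_r) over a
Nakagami-m channel: ε₁E[Y²] + ε₂E[Y⁴]
= ε₁(β_r²+β²)/(2β_r) + ε₂(3(1+m)/(8m))(1+6ζ²+ζ⁴)(2β_r²−β_r). -/
theorem stmt_12 {Ω : Type*} [MeasurableSpace Ω] (P : Measure Ω) [IsProbabilityMeasure P]
    (βr ζ β : ℕ) (hβr : 0 < βr) (hζ : 0 < ζ) (hβ : β = ζ * βr)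
    (m : ℝ) (hm : 1 ≤ m)
    (x : Fin βr → Ω → ℝ) (d h : Ω → ℝ)
    (hxmeas : ∀ k, Measurable (x k)) (hdmeas : Measurable d) (hhmeas : Measurable h)
    (hxlaw : ∀ k, Measure.map (x k) P = arcsineMeasure)
    (hdlaw : Measure.map d P = rademacherMeasure)
    (hhlaw : Measure.map h P = nakagamiMeasure m)
    (hindep : iIndepFun (Sum.elim x ![d, h]) P)
    (Y : Ω → ℝ) (hY : Y = fun ω => h ω * (1 + (ζ : ℝ) * d ω) * ∑ k, x k ω)
    (ε₁ ε₂ : ℝ) :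
    ε₁ * (∫ ω, Y ω ^ 2 ∂P) + ε₂ * (∫ ω, Y ω ^ 4 ∂P)
      = ε₁ * (((βr : ℝ) ^ 2 + (β : ℝ) ^ 2) / (2 * (βr : ℝ)))
        + ε₂ * (3 * (1 + m) / (8 * m)) * (1 + 6 * (ζ : ℝ) ^ 2 + (ζ : ℝ) ^ 4)
          * (2 * (βr : ℝ) ^ 2 - (βr : ℝ)) := by
  classical
  have hm0 : (0:ℝ) < m := lt_of_lt_of_le one_pos hm
  set g : (Fin βr ⊕ Fin 2) → Ω → ℝ := Sum.elim x ![d, h] with hgdef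
  have hg0 : g (Sum.inr 0) = d := by simp [hgdef]
  have hg1 : g (Sum.inr 1) = h := by simp [hgdef]
  have hgl : ∀ k, g (Sum.inl k) = x k := fun k => rfl
  have hgmeas : ∀ i, Measurable (g i) := by
    rintro (k | j)
    · exact hxmeas k
    · fin_cases j
      · simpa [hgdef] using hdmeas
      · simpa [hgdef] using hhmeas
  -- moments of x k on Ω
  have hxm : ∀ (k : Fin βr) (n : ℕ), ∫ ω, x k ω ^ n ∂P = ∫ y, y ^ n ∂arcsineMeasure := by
    intro k n
    rw [← hxlaw k]
    exact (integral_map (hxmeas k).aemeasurable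
      (measurable_id.pow_const n).aestronglyMeasurable).symm
  -- ae bound for x k
  have hAmeas : MeasurableSet {y : ℝ | 1 < |y|} :=
    measurableSet_lt measurable_const (by fun_prop)
  have hxbd : ∀ k : Fin βr, ∀ᵐ ω ∂P, |x k ω| ≤ 1 := by
    intro k
    have h0 : P (x k ⁻¹' {y : ℝ | 1 < |y|}) = 0 := by
      rw [← Measure.map_apply (hxmeas k) hAmeas, hxlaw k, arcsineMeasure,
        withDensity_apply _ hAmeas]
      have hz : ∀ᵐ y ∂volume, y ∈ {y : ℝ | 1 < |y|} →
          ENNReal.ofReal (if |y| < 1 then 1 / (Real.pi * Real.sqrt (1 - y ^ 2)) else 0)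
            = 0 := by
        filter_upwards with y hy
        rw [if_neg (not_lt.2 (le_of_lt hy))]
        exact ENNReal.ofReal_zero
      rw [setLIntegral_congr_fun_ae hAmeas hz, lintegral_zero]
    rw [ae_iff]
    have hset : {ω | ¬ |x k ω| ≤ 1} = x k ⁻¹' {y : ℝ | 1 < |y|} := by
      ext ω; simp [not_le]
    rw [hset]; exact h0
  -- ae bound for d
  have hdbd : ∀ᵐ ω ∂P, |d ω| ≤ 1 := by
    have h0 : P (d ⁻¹' {y : ℝ | 1 < |y|}) = 0 := by
      rw [← Measure.map_apply hdmeas hAmeas, hdlaw, rademacherMeasure]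
      rw [Measure.add_apply, Measure.smul_apply, Measure.smul_apply,
        Measure.dirac_apply' _ hAmeas, Measure.dirac_apply' _ hAmeas]
      rw [Set.indicator_of_notMem (by norm_num), Set.indicator_of_notMem (by norm_num)]
      simp
    rw [ae_iff]
    have hset : {ω | ¬ |d ω| ≤ 1} = d ⁻¹' {y : ℝ | 1 < |y|} := by ext ω; simp [not_le]
    rw [hset]; exact h0
  -- moments of the d-expression
  have hdm : ∀ n : ℕ, ∫ ω, (1 + (ζ:ℝ) * d ω) ^ n ∂P
      = ((1 - (ζ:ℝ)) ^ n + (1 + (ζ:ℝ)) ^ n) / 2 := by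
    intro n
    have h1 : ∫ ω, (1 + (ζ:ℝ) * d ω) ^ n ∂P
        = ∫ y, (1 + (ζ:ℝ) * y) ^ n ∂rademacherMeasure := by
      rw [← hdlaw]
      exact (integral_map hdmeas.aemeasurable
        (((measurable_const.add (measurable_const.mul measurable_id)).pow_const
          n).aestronglyMeasurable)).symm
    rw [h1, rademacher_integral (fun y => (1 + (ζ:ℝ) * y) ^ n)]
    norm_num
    rw [show (1:ℝ) + -(ζ:ℝ) = 1 - (ζ:ℝ) by ring]
  -- moments of h
  have hhm : ∀ n : ℕ, ∫ ω, h ω ^ n ∂P = ∫ y, y ^ n ∂nakagamiMeasure m := by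
    intro n
    rw [← hhlaw]
    exact (integral_map hhmeas.aemeasurable
      (measurable_id.pow_const n).aestronglyMeasurable).symm
  -- partial sums
  set T : ℕ → Ω → ℝ :=
    fun n ω => ∑ k ∈ Finset.univ.filter (fun k : Fin βr => (k:ℕ) < n), x k ω with hTdef
  have hTmeas : ∀ n, Measurable (T n) := fun n => Finset.measurable_sum _ fun k _ => hxmeas k
  have hTbd : ∀ n, ∀ᵐ ω ∂P, |T n ω| ≤ (βr:ℝ) := by
    intro n
    filter_upwards [ae_all_iff.2 hxbd] with ω hω
    calc |T n ω| ≤ ∑ k ∈ Finset.univ.filter (fun k : Fin βr => (k:ℕ) < n), |x k ω| :=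
          Finset.abs_sum_le_sum_abs _ _
      _ ≤ ∑ _k ∈ Finset.univ.filter (fun k : Fin βr => (k:ℕ) < n), (1:ℝ) :=
          Finset.sum_le_sum fun k _ => hω k
      _ = ((Finset.univ.filter (fun k : Fin βr => (k:ℕ) < n)).card : ℝ) := by simp
      _ ≤ (βr:ℝ) := by
          have h2 := Finset.card_filter_le (Finset.univ : Finset (Fin βr))
            (fun k => (k:ℕ) < n)
          have h3 : (Finset.univ : Finset (Fin βr)).card = βr := by simp
          exact_mod_cast h3 ▸ h2
  -- independence of partial sum and next term
  have hindepT : ∀ (n : ℕ) (hn : n < βr), IndepFun (T n) (x ⟨n, hn⟩) P := by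
    intro n hn
    have hnot : (Sum.inl ⟨n, hn⟩ : Fin βr ⊕ Fin 2)
        ∉ (Finset.univ.filter (fun k : Fin βr => (k:ℕ) < n)).map
            ⟨Sum.inl, Sum.inl_injective⟩ := by
      simp
    have H := hindep.indepFun_finsetSum_of_notMem hgmeas hnot
    have hsum : (∑ j ∈ (Finset.univ.filter (fun k : Fin βr => (k:ℕ) < n)).map
        ⟨Sum.inl, Sum.inl_injective⟩, g j) = T n := by
      funext ω
      rw [Finset.sum_apply, Finset.sum_map]
      simp only [Function.Embedding.coeFn_mk]
      rfl
    rw [hsum] at H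
    exact H
  -- moments of partial sums, by induction
  have moments : ∀ n, n ≤ βr →
      (∫ ω, T n ω ∂P = 0) ∧ (∫ ω, T n ω ^ 2 ∂P = (n:ℝ) / 2) ∧ (∫ ω, T n ω ^ 3 ∂P = 0)
        ∧ (∫ ω, T n ω ^ 4 ∂P = 3 / 8 * (2 * (n:ℝ) ^ 2 - (n:ℝ))) := by
    intro n
    induction n with
    | zero =>
      intro _
      have hT0 : T 0 = fun _ => (0:ℝ) := by
        funext ω; simp [hTdef]
      rw [hT0]
      norm_num
    | succ n ih =>
      intro hn1
      have hn : n < βr := hn1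
      obtain ⟨ih1, ih2, ih3, ih4⟩ := ih (le_of_lt hn)
      have hstep : ∀ ω, T (n+1) ω = T n ω + x ⟨n, hn⟩ ω := by
        intro ω
        have hfil : Finset.univ.filter (fun k : Fin βr => (k:ℕ) < n+1)
            = insert (⟨n, hn⟩ : Fin βr)
                (Finset.univ.filter (fun k : Fin βr => (k:ℕ) < n)) := by
          ext k
          simp [Fin.ext_iff]
          omega
        simp only [hTdef]
        rw [hfil, Finset.sum_insert (by simp)]
        ring
      have hx1 : ∫ ω, x ⟨n, hn⟩ ω ∂P = 0 := by
        have := (hxm ⟨n, hn⟩ 1).trans (by simpa using arcsine_m1)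
        simpa using this
      have hsm := sum_moments (P := P) (hindepT n hn) (hTmeas n) (hxmeas _) (hTbd n)
        (hxbd ⟨n, hn⟩) ih1 ih2 ih3 ih4 hx1 ((hxm _ 2).trans arcsine_m2)
        ((hxm _ 3).trans arcsine_m3) ((hxm _ 4).trans arcsine_m4)
      have hc : ∀ j : ℕ, ∫ ω, T (n+1) ω ^ j ∂P = ∫ ω, (T n ω + x ⟨n, hn⟩ ω) ^ j ∂P := by
        intro j
        apply integral_congr_ae
        filter_upwards with ω
        rw [hstep ω]
      have hc1 : ∫ ω, T (n+1) ω ∂P = ∫ ω, (T n ω + x ⟨n, hn⟩ ω) ∂P := by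
        apply integral_congr_ae
        filter_upwards with ω
        rw [hstep ω]
      refine ⟨?_, ?_, ?_, ?_⟩
      · rw [hc1, hsm.1]
      · rw [hc 2, hsm.2.1]
        push_cast
        ring
      · rw [hc 3, hsm.2.2.1]
      · rw [hc 4, hsm.2.2.2]
        push_cast
        ring
  -- the full sum S
  have hTSω : ∀ ω, T βr ω = ∑ k, x k ω := by
    intro ω
    simp only [hTdef]
    rw [Finset.filter_true_of_mem (fun k _ => k.isLt)]
  have hS2 : ∫ ω, (∑ k, x k ω) ^ 2 ∂P = (βr:ℝ) / 2 := by
    rw [← (moments βr le_rfl).2.1]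
    apply integral_congr_ae; filter_upwards with ω; rw [hTSω ω]
  have hS4 : ∫ ω, (∑ k, x k ω) ^ 4 ∂P = 3 / 8 * (2 * (βr:ℝ) ^ 2 - (βr:ℝ)) := by
    rw [← (moments βr le_rfl).2.2.2]
    apply integral_congr_ae; filter_upwards with ω; rw [hTSω ω]
  have hSmeas : Measurable (fun ω => ∑ k, x k ω) :=
    Finset.measurable_sum _ fun k _ => hxmeas k
  have hSbd : ∀ᵐ ω ∂P, |∑ k, x k ω| ≤ (βr:ℝ) := by
    filter_upwards [hTbd βr] with ω hω
    rw [← hTSω ω]; exact hω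
  -- independence of S and d
  have hindepSd : IndepFun (fun ω => ∑ k, x k ω) d P := by
    have hnot : (Sum.inr 0 : Fin βr ⊕ Fin 2)
        ∉ (Finset.univ : Finset (Fin βr)).map ⟨Sum.inl, Sum.inl_injective⟩ := by simp
    have H := hindep.indepFun_finsetSum_of_notMem hgmeas hnot
    have hsum : (∑ j ∈ (Finset.univ : Finset (Fin βr)).map ⟨Sum.inl, Sum.inl_injective⟩, g j)
        = fun ω => ∑ k, x k ω := by
      funext ω
      rw [Finset.sum_apply, Finset.sum_map]
      simp only [Function.Embedding.coeFn_mk]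
      rfl
    rw [hsum, hg0] at H
    exact H
  -- bounds for the d-expression and the product
  have hUbd : ∀ᵐ ω ∂P, |1 + (ζ:ℝ) * d ω| ≤ 1 + (ζ:ℝ) := by
    filter_upwards [hdbd] with ω hω
    have hz : (0:ℝ) ≤ (ζ:ℝ) := Nat.cast_nonneg ζ
    calc |1 + (ζ:ℝ) * d ω| ≤ |(1:ℝ)| + |(ζ:ℝ) * d ω| := abs_add_le _ _
      _ = 1 + (ζ:ℝ) * |d ω| := by rw [abs_one, abs_mul, abs_of_nonneg hz]
      _ ≤ 1 + (ζ:ℝ) * 1 := by nlinarith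
      _ = 1 + (ζ:ℝ) := by ring
  have hUmeas : Measurable (fun ω => 1 + (ζ:ℝ) * d ω) :=
    measurable_const.add (measurable_const.mul hdmeas)
  have hWmeas : Measurable (fun ω => (1 + (ζ:ℝ) * d ω) * ∑ k, x k ω) := hUmeas.mul hSmeas
  have hWbd : ∀ᵐ ω ∂P, |(1 + (ζ:ℝ) * d ω) * ∑ k, x k ω| ≤ (1 + (ζ:ℝ)) * (βr:ℝ) := by
    filter_upwards [hUbd, hSbd] with ω h1 h2
    rw [abs_mul]
    exact mul_le_mul h1 h2 (abs_nonneg _) (by positivity)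
  -- factorization over d and S
  have hUS : ∀ κ : ℕ, ∫ ω, (1 + (ζ:ℝ) * d ω) ^ κ * (∑ k, x k ω) ^ κ ∂P
      = (((1 - (ζ:ℝ)) ^ κ + (1 + (ζ:ℝ)) ^ κ) / 2) * (∫ ω, (∑ k, x k ω) ^ κ ∂P) := by
    intro κ
    have hUk : IndepFun (fun ω => (1 + (ζ:ℝ) * d ω) ^ κ) (fun ω => (∑ k, x k ω) ^ κ) P :=
      hindepSd.symm.comp
        ((measurable_const.add (measurable_const.mul measurable_id)).pow_const κ)
        (measurable_id.pow_const κ)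
    have hmul : ∫ ω, (1 + (ζ:ℝ) * d ω) ^ κ * (∑ k, x k ω) ^ κ ∂P
        = (∫ ω, (1 + (ζ:ℝ) * d ω) ^ κ ∂P) * (∫ ω, (∑ k, x k ω) ^ κ ∂P) :=
      hUk.integral_fun_mul_eq_mul_integral (pow_integrable hUmeas hUbd κ).aestronglyMeasurable
        (pow_integrable hSmeas hSbd κ).aestronglyMeasurable
    rw [hmul, hdm κ]
  -- independence of the product and h
  have hindephW : IndepFun (fun ω => (1 + (ζ:ℝ) * d ω) * ∑ k, x k ω) h P := by
    have hdisj : Disjoint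
        (insert (Sum.inr 0) ((Finset.univ : Finset (Fin βr)).map ⟨Sum.inl, Sum.inl_injective⟩))
        ({Sum.inr 1} : Finset (Fin βr ⊕ Fin 2)) := by
      rw [Finset.disjoint_singleton_right]
      simp
    have H := hindep.indepFun_finset _ _ hdisj hgmeas
    have h0mem : (Sum.inr 0 : Fin βr ⊕ Fin 2) ∈
        insert (Sum.inr 0) ((Finset.univ : Finset (Fin βr)).map ⟨Sum.inl, Sum.inl_injective⟩) :=
      Finset.mem_insert_self _ _
    have hkmem : ∀ k : Fin βr, (Sum.inl k : Fin βr ⊕ Fin 2) ∈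
        insert (Sum.inr 0) ((Finset.univ : Finset (Fin βr)).map ⟨Sum.inl, Sum.inl_injective⟩) :=
      fun k => Finset.mem_insert_of_mem (Finset.mem_map_of_mem _ (Finset.mem_univ k))
    have h1mem : (Sum.inr 1 : Fin βr ⊕ Fin 2) ∈ ({Sum.inr 1} : Finset (Fin βr ⊕ Fin 2)) :=
      Finset.mem_singleton_self _
    have hφ : Measurable (fun v : ((i : (insert (Sum.inr 0)
        ((Finset.univ : Finset (Fin βr)).map ⟨Sum.inl, Sum.inl_injective⟩) :
          Finset (Fin βr ⊕ Fin 2))) → ℝ) =>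
        (1 + (ζ:ℝ) * v ⟨Sum.inr 0, h0mem⟩) * ∑ k : Fin βr, v ⟨Sum.inl k, hkmem k⟩) := by
      fun_prop
    have hψ : Measurable (fun v : ((i : ({Sum.inr 1} : Finset (Fin βr ⊕ Fin 2))) → ℝ) =>
        v ⟨Sum.inr 1, h1mem⟩) := measurable_pi_apply _
    exact H.comp hφ hψ
  -- integrability of powers of h
  have hhint : ∀ j : ℕ, 1 ≤ j → Integrable (fun ω => h ω ^ (2*j)) P := by
    intro j hj
    have hi := nak_integrable m hm0 j hj
    rw [← hhlaw] at hi
    exact (integrable_map_measure (measurable_id.pow_const (2*j)).aestronglyMeasurable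
      hhmeas.aemeasurable).mp hi
  -- factorization over h and the rest
  have hhW : ∀ j : ℕ, 1 ≤ j →
      ∫ ω, h ω ^ (2*j) * ((1 + (ζ:ℝ) * d ω) * ∑ k, x k ω) ^ (2*j) ∂P
        = (∫ ω, h ω ^ (2*j) ∂P)
          * (∫ ω, ((1 + (ζ:ℝ) * d ω) * ∑ k, x k ω) ^ (2*j) ∂P) := by
    intro j hj
    have hind2 : IndepFun (fun ω => h ω ^ (2*j))
        (fun ω => ((1 + (ζ:ℝ) * d ω) * ∑ k, x k ω) ^ (2*j)) P :=
      hindephW.symm.comp (φ := fun y : ℝ => y ^ (2*j)) (ψ := fun y : ℝ => y ^ (2*j))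
        (measurable_id.pow_const _) (measurable_id.pow_const _)
    exact hind2.integral_fun_mul_eq_mul_integral (hhint j hj).aestronglyMeasurable
        (pow_integrable hWmeas hWbd (2*j)).aestronglyMeasurable

  -- values of h moments
  have hh2 : ∫ ω, h ω ^ 2 ∂P = 1 := by rw [hhm 2, nak_m2 m hm0]
  have hh4 : ∫ ω, h ω ^ 4 ∂P = (1 + m) / m := by rw [hhm 4, nak_m4 m hm0]
  -- final computation of E[Y^2] and E[Y^4]
  subst hY
  have E2 : ∫ ω, (h ω * (1 + (ζ:ℝ) * d ω) * ∑ k, x k ω) ^ 2 ∂P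
      = 1 * ((((1 - (ζ:ℝ)) ^ 2 + (1 + (ζ:ℝ)) ^ 2) / 2) * ((βr:ℝ) / 2)) := by
    have e : ∫ ω, (h ω * (1 + (ζ:ℝ) * d ω) * ∑ k, x k ω) ^ 2 ∂P
        = ∫ ω, h ω ^ 2 * ((1 + (ζ:ℝ) * d ω) * ∑ k, x k ω) ^ 2 ∂P := by
      apply integral_congr_ae; filter_upwards with ω; ring
    have hw := hhW 1 le_rfl
    rw [show 2*1 = 2 from rfl] at hw
    have e2 : ∫ ω, ((1 + (ζ:ℝ) * d ω) * ∑ k, x k ω) ^ 2 ∂P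
        = (((1 - (ζ:ℝ)) ^ 2 + (1 + (ζ:ℝ)) ^ 2) / 2) * ((βr:ℝ) / 2) := by
      have e3 : ∫ ω, ((1 + (ζ:ℝ) * d ω) * ∑ k, x k ω) ^ 2 ∂P
          = ∫ ω, (1 + (ζ:ℝ) * d ω) ^ 2 * (∑ k, x k ω) ^ 2 ∂P := by
        apply integral_congr_ae; filter_upwards with ω; ring
      rw [e3, hUS 2, hS2]
    rw [e, hw, e2, hh2]
  have E4 : ∫ ω, (h ω * (1 + (ζ:ℝ) * d ω) * ∑ k, x k ω) ^ 4 ∂P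
      = ((1 + m) / m) * ((((1 - (ζ:ℝ)) ^ 4 + (1 + (ζ:ℝ)) ^ 4) / 2)
          * (3 / 8 * (2 * (βr:ℝ) ^ 2 - (βr:ℝ)))) := by
    have e : ∫ ω, (h ω * (1 + (ζ:ℝ) * d ω) * ∑ k, x k ω) ^ 4 ∂P
        = ∫ ω, h ω ^ 4 * ((1 + (ζ:ℝ) * d ω) * ∑ k, x k ω) ^ 4 ∂P := by
      apply integral_congr_ae; filter_upwards with ω; ring
    have hw := hhW 2 (by norm_num)
    rw [show 2*2 = 4 from rfl] at hw
    have e2 : ∫ ω, ((1 + (ζ:ℝ) * d ω) * ∑ k, x k ω) ^ 4 ∂P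
        = (((1 - (ζ:ℝ)) ^ 4 + (1 + (ζ:ℝ)) ^ 4) / 2)
            * (3 / 8 * (2 * (βr:ℝ) ^ 2 - (βr:ℝ))) := by
      have e3 : ∫ ω, ((1 + (ζ:ℝ) * d ω) * ∑ k, x k ω) ^ 4 ∂P
          = ∫ ω, (1 + (ζ:ℝ) * d ω) ^ 4 * (∑ k, x k ω) ^ 4 ∂P := by
        apply integral_congr_ae; filter_upwards with ω; ring
      rw [e3, hUS 4, hS4]
    rw [e, hw, e2, hh4]
  simp only []
  rw [E2, E4]
  subst hβ
  have hβr' : ((βr:ℝ)) ≠ 0 := Nat.cast_ne_zero.2 hβr.ne'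
  have hm' : m ≠ 0 := hm0.ne'
  push_cast
  field_simp
  ring
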